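/- Let a, b, g', k be positive integers. Suppose there exists a tree T with a vertex v such that a(T,v) = a and b(T,v) = b, and there exists a tree T' with a vertex v' such that a(T',v') = g' and b(T',v') = k·g'. Then there exists a tree T₀ with a vertex w such that a(T₀,w) = k·g'²·b and b(T₀,w) = k·g'²·(a + k·b). -/

import Mathlib

/-- The number of independent sets of `G` containing the vertex `v`. -/
noncomputable def aCount {V : Type*} (G : SimpleGraph V) (v : V) : ℕ :=
  Nat.card {s : Set V // v ∈ s ∧ ∀ x ∈ s, ∀ y ∈ s, ¬ G.Adj x y}

/-- The number of independent sets of `G` not containing the vertex `v`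
(including the empty set). -/
noncomputable def bCount {V : Type*} (G : SimpleGraph V) (v : V) : ℕ :=
  Nat.card {s : Set V // v ∉ s ∧ ∀ x ∈ s, ∀ y ∈ s, ¬ G.Adj x y}


open SimpleGraph

variable {V W : Type*}

lemma lift_walk {G : SimpleGraph V} {H : SimpleGraph W} (f : G →g H)
    (hinj : Function.Injective f)
    (hrefl : ∀ a b : V, H.Adj (f a) (f b) → G.Adj a b) :
    ∀ {u w : W} (c : H.Walk u w), (∀ z ∈ c.support, ∃ z', z = f z') →
      ∀ (x y : V) (hu : u = f x) (hw : w = f y),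
      ∃ p : G.Walk x y, p.map f = c.copy hu hw := by
  intro u w c
  induction c with
  | nil =>
    intro hs x y hu hw
    obtain rfl : x = y := hinj (hu ▸ hw)
    subst hu
    exact ⟨Walk.nil, by simp⟩
  | @cons u' z w' h q ih =>
    intro hs x y hu hw
    obtain ⟨x', rfl⟩ : ∃ z', z = f z' := hs z (by simp [Walk.support_cons])
    subst hu
    obtain ⟨p, hp⟩ := ih (fun t ht => hs t (by simp [Walk.support_cons, ht])) x' y rfl hw
    exact ⟨Walk.cons (hrefl _ _ h) p, by subst hw; simpa using hp⟩

lemma no_cycle_of_lift {G : SimpleGraph V} {H : SimpleGraph W} (f : G →g H)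
    (hinj : Function.Injective f)
    (hrefl : ∀ a b : V, H.Adj (f a) (f b) → G.Adj a b)
    (hG : G.IsAcyclic) {u : W} (c : H.Walk u u) (hc : c.IsCycle)
    (hsup : ∀ z ∈ c.support, ∃ z', z = f z') : False := by
  obtain ⟨x, rfl⟩ := hsup u c.start_mem_support
  obtain ⟨p, hp⟩ := lift_walk f hinj hrefl c hsup x x rfl rfl
  have : p.IsCycle := by
    rw [← Walk.map_isCycle_iff_of_injective hinj, hp]
    simpa using hc
  exact hG p this

/-- Walk ending at `m` with `m` not in the interior: support lies on one side. -/
lemma walk_side {H : SimpleGraph W} (m : W) (A B : Set W)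
    (hAB : ∀ z, z ∈ A ∨ z ∈ B) (hmA : m ∈ A) (hmB : m ∈ B)
    (hedgeA : ∀ x y, H.Adj x y → x ≠ m → y ≠ m → (x ∈ A ↔ y ∈ A))
    (hedgeB : ∀ x y, H.Adj x y → x ≠ m → y ≠ m → (x ∈ B ↔ y ∈ B)) :
    ∀ {zz ww : W} (p : H.Walk zz ww), m = ww →
      (∀ z ∈ p.support.dropLast, z ≠ m) →
      (∀ z ∈ p.support, z ∈ A) ∨ (∀ z ∈ p.support, z ∈ B) := by
  intro zz ww p
  induction p with
  | nil =>
    rintro rfl _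
    exact Or.inl (by intro z hz; simp [Walk.support_nil] at hz; subst hz; exact hmA)
  | @cons u' z w' h q ih =>
    rintro rfl hint
    have hu'm : u' ≠ m := by
      apply hint
      rw [Walk.support_cons, List.dropLast_cons_of_ne_nil (Walk.support_ne_nil q)]
      simp
    have hqint : ∀ t ∈ q.support.dropLast, t ≠ m := by
      intro t ht
      apply hint
      rw [Walk.support_cons, List.dropLast_cons_of_ne_nil (Walk.support_ne_nil q)]
      simp [ht]
    cases q with
    | nil =>
      rcases hAB u' with hA | hB
      · refine Or.inl ?_
        intro t ht
        simp only [Walk.support_cons, Walk.support_nil, List.mem_cons, List.mem_singleton] at ht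
        rcases ht with rfl | ht
        · exact hA
        · simp at ht; subst ht; exact hmA
      · refine Or.inr ?_
        intro t ht
        simp only [Walk.support_cons, Walk.support_nil, List.mem_cons, List.mem_singleton] at ht
        rcases ht with rfl | ht
        · exact hB
        · simp at ht; subst ht; exact hmB
    | @cons z z₂ w₂ h₂ q₂ =>
      have hzm : z ≠ m := by
        apply hqint
        rw [Walk.support_cons, List.dropLast_cons_of_ne_nil (Walk.support_ne_nil q₂)]
        simp
      rcases ih rfl hqint with hA | hB
      · refine Or.inl ?_
        intro t ht
        rw [Walk.support_cons] at ht
        rcases List.mem_cons.mp ht with rfl | ht'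
        · exact (hedgeA t z h hu'm hzm).mpr (hA z (Walk.start_mem_support _))
        · exact hA t ht'
      · refine Or.inr ?_
        intro t ht
        rw [Walk.support_cons] at ht
        rcases List.mem_cons.mp ht with rfl | ht'
        · exact (hedgeB t z h hu'm hzm).mpr (hB z (Walk.start_mem_support _))
        · exact hB t ht'

/-- Walk avoiding `m` entirely lies on one side. -/
lemma walk_side' {H : SimpleGraph W} (m : W) (A B : Set W)
    (hAB : ∀ z, z ∈ A ∨ z ∈ B)
    (hedgeA : ∀ x y, H.Adj x y → x ≠ m → y ≠ m → (x ∈ A ↔ y ∈ A))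
    (hedgeB : ∀ x y, H.Adj x y → x ≠ m → y ≠ m → (x ∈ B ↔ y ∈ B)) :
    ∀ {zz ww : W} (p : H.Walk zz ww), (∀ z ∈ p.support, z ≠ m) →
      (∀ z ∈ p.support, z ∈ A) ∨ (∀ z ∈ p.support, z ∈ B) := by
  intro zz ww p
  induction p with
  | @nil u0 =>
    intro _
    rcases hAB u0 with h | h
    · refine Or.inl fun z hz => ?_
      have : z = u0 := by simpa using hz
      rw [this]; exact h
    · refine Or.inr fun z hz => ?_
      have : z = u0 := by simpa using hz
      rw [this]; exact h
  | @cons u' z w' h q ih =>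
    intro havoid
    have hu'm : u' ≠ m := havoid u' (by simp [Walk.support_cons])
    have hzm : z ≠ m := havoid z (by simp [Walk.support_cons, Walk.start_mem_support])
    have hq : ∀ t ∈ q.support, t ≠ m := fun t ht => havoid t (by simp [Walk.support_cons, ht])
    rcases ih hq with hA | hB
    · refine Or.inl ?_
      intro t ht
      rw [Walk.support_cons] at ht
      rcases List.mem_cons.mp ht with rfl | ht'
      · exact (hedgeA t z h hu'm hzm).mpr (hA z (Walk.start_mem_support _))
      · exact hA t ht'
    · refine Or.inr ?_
      intro t ht
      rw [Walk.support_cons] at ht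
      rcases List.mem_cons.mp ht with rfl | ht'
      · exact (hedgeB t z h hu'm hzm).mpr (hB z (Walk.start_mem_support _))
      · exact hB t ht'

lemma closed_walk_start_mem_tail {H : SimpleGraph W} {u : W} (c : H.Walk u u)
    (hc : ¬ c.Nil) : u ∈ c.support.tail := by
  cases c with
  | nil => simp at hc
  | cons h q => simpa [Walk.support_cons] using q.end_mem_support

lemma cycle_side [DecidableEq W] {H : SimpleGraph W} (m : W) (A B : Set W)
    (hAB : ∀ z, z ∈ A ∨ z ∈ B) (hmA : m ∈ A) (hmB : m ∈ B)
    (hedgeA : ∀ x y, H.Adj x y → x ≠ m → y ≠ m → (x ∈ A ↔ y ∈ A))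
    (hedgeB : ∀ x y, H.Adj x y → x ≠ m → y ≠ m → (x ∈ B ↔ y ∈ B))
    {u : W} (c : H.Walk u u) (hc : c.IsCycle) :
    (∀ z ∈ c.support, z ∈ A) ∨ (∀ z ∈ c.support, z ∈ B) := by
  by_cases hm : m ∈ c.support
  · have hc' := hc.rotate hm
    set c' := c.rotate m hm with hc'def
    have hmem : ∀ z ∈ c.support, z ∈ c'.support := by
      intro z hz
      have hperm := Walk.support_rotate c m hm
      rcases (Walk.mem_support_iff _).mp hz with rfl | hz'
      · have : z ∈ c.support.tail := closed_walk_start_mem_tail c hc.not_nil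
        exact List.mem_of_mem_tail (hperm.mem_iff.mpr this)
      · exact List.mem_of_mem_tail (hperm.mem_iff.mpr hz')
    have hside : (∀ z ∈ c'.support, z ∈ A) ∨ (∀ z ∈ c'.support, z ∈ B) := by
      cases hc'eq : c' with
      | nil =>
        rw [hc'eq] at hc'
        exact absurd hc' Walk.IsCycle.not_of_nil
      | @cons _ z _ h q =>
        have hnodup : q.support.Nodup := by
          have := hc'.support_nodup
          rw [hc'eq] at this
          simpa [Walk.support_cons] using this
        have hqint : ∀ t ∈ q.support.dropLast, t ≠ m := by
          have hlast : q.support.getLast (Walk.support_ne_nil q) = m := Walk.getLast_support q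
          have hsplit := List.dropLast_append_getLast (Walk.support_ne_nil q)
          rw [hlast] at hsplit
          rw [← hsplit] at hnodup
          intro t ht htm
          exact (List.disjoint_of_nodup_append hnodup) ht (by simp [htm])
        rcases walk_side m A B hAB hmA hmB hedgeA hedgeB q rfl hqint with hA | hB
        · refine Or.inl ?_
          intro t ht
          rw [Walk.support_cons] at ht
          rcases List.mem_cons.mp ht with rfl | ht'
          · exact hmA
          · exact hA t ht'
        · refine Or.inr ?_
          intro t ht
          rw [Walk.support_cons] at ht
          rcases List.mem_cons.mp ht with rfl | ht'
          · exact hmB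
          · exact hB t ht'
    rcases hside with hA | hB
    · exact Or.inl fun z hz => hA z (hmem z hz)
    · exact Or.inr fun z hz => hB z (hmem z hz)
  · exact walk_side' m A B hAB hedgeA hedgeB c (fun z hz h => hm (h ▸ hz))

section MergeDef
variable {V₁ V₂ : Type*} (G₁ : SimpleGraph V₁) (G₂ : SimpleGraph V₂) (v₁ : V₁) (v₂ : V₂)

/-- Glue `G₂` onto `G₁` identifying `v₂` with `v₁`. -/
def Merge : SimpleGraph (V₁ ⊕ {x : V₂ // x ≠ v₂}) where
  Adj z w :=
    match z, w with
    | Sum.inl a, Sum.inl b => G₁.Adj a b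
    | Sum.inl a, Sum.inr b => a = v₁ ∧ G₂.Adj v₂ b.1
    | Sum.inr a, Sum.inl b => b = v₁ ∧ G₂.Adj v₂ a.1
    | Sum.inr a, Sum.inr b => G₂.Adj a.1 b.1
  symm := by
    constructor
    rintro (a | a) (b | b) h
    · exact G₁.adj_symm h
    · exact h
    · exact h
    · exact G₂.adj_symm h
  loopless := by
    constructor
    rintro (a | a) h
    · exact G₁.irrefl h
    · exact G₂.irrefl h

@[simp] lemma merge_adj_inl_inl {a b : V₁} :
    (Merge G₁ G₂ v₁ v₂).Adj (Sum.inl a) (Sum.inl b) ↔ G₁.Adj a b := Iff.rfl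
@[simp] lemma merge_adj_inl_inr {a : V₁} {b : {x : V₂ // x ≠ v₂}} :
    (Merge G₁ G₂ v₁ v₂).Adj (Sum.inl a) (Sum.inr b) ↔ a = v₁ ∧ G₂.Adj v₂ b.1 := Iff.rfl
@[simp] lemma merge_adj_inr_inl {a : {x : V₂ // x ≠ v₂}} {b : V₁} :
    (Merge G₁ G₂ v₁ v₂).Adj (Sum.inr a) (Sum.inl b) ↔ b = v₁ ∧ G₂.Adj v₂ a.1 := Iff.rfl
@[simp] lemma merge_adj_inr_inr {a b : {x : V₂ // x ≠ v₂}} :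
    (Merge G₁ G₂ v₁ v₂).Adj (Sum.inr a) (Sum.inr b) ↔ G₂.Adj a.1 b.1 := Iff.rfl

variable [DecidableEq V₂]

/-- The map from `V₂` into the merged graph. -/
def mergeR (x : V₂) : V₁ ⊕ {x : V₂ // x ≠ v₂} :=
  if h : x = v₂ then Sum.inl v₁ else Sum.inr ⟨x, h⟩

lemma mergeR_inj : Function.Injective (mergeR (V₁ := V₁) v₁ v₂) := by
  intro a b hab
  unfold mergeR at hab
  split_ifs at hab with h1 h2 h2
  · exact h1.trans h2.symm
  · exact congrArg Subtype.val (Sum.inr.inj hab)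

/-- `mergeR` as a graph hom. -/
def mergeRHom : G₂ →g Merge G₁ G₂ v₁ v₂ where
  toFun := mergeR v₁ v₂
  map_rel' := by
    intro a b hab
    unfold mergeR
    split_ifs with h1 h2 h2
    · subst h1; subst h2; exact absurd hab (G₂.irrefl)
    · subst h1; exact ⟨rfl, hab⟩
    · subst h2; exact ⟨rfl, G₂.adj_symm hab⟩
    · exact hab

lemma mergeRHom_refl (a b : V₂)
    (h : (Merge G₁ G₂ v₁ v₂).Adj (mergeR v₁ v₂ a) (mergeR v₁ v₂ b)) : G₂.Adj a b := by
  unfold mergeR at h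
  split_ifs at h with h1 h2 h2
  · subst h1; subst h2; exact absurd h (SimpleGraph.irrefl _)
  · subst h1; exact h.2
  · subst h2; exact G₂.adj_symm h.2
  · exact h

/-- `Sum.inl` as a graph hom. -/
def mergeLHom : G₁ →g Merge G₁ G₂ v₁ v₂ where
  toFun := Sum.inl
  map_rel' := fun h => h

end MergeDef

section MergeTree
variable {V₁ V₂ : Type*} [DecidableEq V₁] [DecidableEq V₂]
  (G₁ : SimpleGraph V₁) (G₂ : SimpleGraph V₂) (v₁ : V₁) (v₂ : V₂)

@[simp] lemma mergeR_self : mergeR (V₁ := V₁) v₁ v₂ v₂ = Sum.inl v₁ := by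
  simp [mergeR]

@[simp] lemma mergeR_ne (x : V₂) (h : x ≠ v₂) :
    mergeR (V₁ := V₁) v₁ v₂ x = Sum.inr ⟨x, h⟩ := by
  simp [mergeR, h]

@[simp] lemma mergeRHom_apply (x : V₂) :
    mergeRHom G₁ G₂ v₁ v₂ x = mergeR (V₁ := V₁) v₁ v₂ x := rfl

lemma mem_range_mergeR_inl {a : V₁} :
    Sum.inl a ∈ Set.range (mergeR (V₁ := V₁) v₁ v₂) ↔ a = v₁ := by
  constructor
  · rintro ⟨x, hx⟩
    unfold mergeR at hx
    split_ifs at hx with h <;>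
      first
        | exact (Sum.inl.inj hx).symm
        | simp at hx
  · intro h
    exact ⟨v₂, by rw [mergeR_self v₁ v₂, h]⟩

lemma mem_range_mergeR_inr (a : {x : V₂ // x ≠ v₂}) :
    Sum.inr a ∈ Set.range (mergeR (V₁ := V₁) v₁ v₂) :=
  ⟨a.1, by simp [mergeR, a.2]⟩

lemma merge_isTree (h₁ : G₁.IsTree) (h₂ : G₂.IsTree) :
    (Merge G₁ G₂ v₁ v₂).IsTree := by
  constructor
  · -- connected
    have hreach : ∀ z : V₁ ⊕ {x : V₂ // x ≠ v₂},
        (Merge G₁ G₂ v₁ v₂).Reachable z (Sum.inl v₁) := by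
      rintro (x | x)
      · exact ((h₁.isConnected).preconnected x v₁).map (mergeLHom G₁ G₂ v₁ v₂)
      · have := ((h₂.isConnected).preconnected x.1 v₂).map (mergeRHom G₁ G₂ v₁ v₂)
        have hx : mergeRHom G₁ G₂ v₁ v₂ x.1 = Sum.inr x := by
          rw [mergeRHom_apply, mergeR_ne v₁ v₂ x.1 x.2]
        have hv : mergeRHom G₁ G₂ v₁ v₂ v₂ = Sum.inl v₁ := by
          rw [mergeRHom_apply, mergeR_self]
        rwa [hx, hv] at this
    exact (connected_iff_exists_forall_reachable _).mpr ⟨Sum.inl v₁, fun w => (hreach w).symm⟩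
  · -- acyclic
    intro u c hc
    have hside := cycle_side (Sum.inl v₁)
      (Set.range Sum.inl) (Set.range (mergeR (V₁ := V₁) v₁ v₂))
      (by rintro (x | x)
          · exact Or.inl ⟨x, rfl⟩
          · exact Or.inr (mem_range_mergeR_inr v₁ v₂ x))
      ⟨v₁, rfl⟩ (⟨v₂, mergeR_self v₁ v₂⟩)
      (by rintro (x | x) (y | y) hadj hxm hym
          · simp
          · simp only [Set.mem_range]
            constructor
            · rintro -
              exact absurd (congrArg Sum.inl hadj.1) hxm
            · rintro ⟨t, ht⟩
              simp at ht
          · simp only [Set.mem_range]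
            constructor
            · rintro ⟨t, ht⟩
              simp at ht
            · rintro -
              exact absurd (congrArg Sum.inl hadj.1) hym
          · constructor
            · rintro ⟨t, ht⟩; simp at ht
            · rintro ⟨t, ht⟩; simp at ht)
      (by rintro (x | x) (y | y) hadj hxm hym
          · rw [mem_range_mergeR_inl, mem_range_mergeR_inl]
            constructor
            · rintro rfl; exact absurd rfl hxm
            · rintro rfl; exact absurd rfl hym
          · exact absurd (congrArg Sum.inl hadj.1) hxm
          · exact absurd (congrArg Sum.inl hadj.1) hym
          · exact iff_of_true (mem_range_mergeR_inr v₁ v₂ x) (mem_range_mergeR_inr v₁ v₂ y))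
      c hc
    rcases hside with hA | hB
    · refine no_cycle_of_lift (mergeLHom G₁ G₂ v₁ v₂) Sum.inl_injective
        (fun a b h => h) h₁.IsAcyclic c hc ?_
      intro z hz
      obtain ⟨t, ht⟩ := hA z hz
      exact ⟨t, ht.symm⟩
    · refine no_cycle_of_lift (mergeRHom G₁ G₂ v₁ v₂) (mergeR_inj v₁ v₂)
        (mergeRHom_refl G₁ G₂ v₁ v₂) h₂.IsAcyclic c hc ?_
      intro z hz
      obtain ⟨t, ht⟩ := hB z hz
      exact ⟨t, ht.symm⟩
end MergeTree

section PendDef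
variable {V : Type*} (G : SimpleGraph V) (v : V)

/-- Attach a new vertex `none` by an edge to `v`. -/
def Pend : SimpleGraph (Option V) where
  Adj z w :=
    match z, w with
    | some a, some b => G.Adj a b
    | some a, none => a = v
    | none, some b => b = v
    | none, none => False
  symm := by
    constructor
    rintro (_ | a) (_ | b) h
    · exact h
    · exact h
    · exact h
    · exact G.adj_symm h
  loopless := by
    constructor
    rintro (_ | a) h
    · exact h
    · exact G.irrefl h

@[simp] lemma pend_adj_some_some {a b : V} : (Pend G v).Adj (some a) (some b) ↔ G.Adj a b := Iff.rfl
@[simp] lemma pend_adj_none_some {b : V} : (Pend G v).Adj none (some b) ↔ b = v := Iff.rfl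
@[simp] lemma pend_adj_some_none {a : V} : (Pend G v).Adj (some a) none ↔ a = v := Iff.rfl
@[simp] lemma pend_adj_none_none : ¬ (Pend G v).Adj none none := fun h => h

/-- The two-vertex path graph. -/
def BoolPath : SimpleGraph Bool where
  Adj x y := x ≠ y
  symm := ⟨fun _ _ h => h.symm⟩
  loopless := ⟨fun _ h => h rfl⟩

lemma boolPath_isAcyclic : (BoolPath).IsAcyclic := by
  intro u c hc
  have h3 := hc.three_le_length
  have hnd := hc.support_nodup
  have h1 : c.support.length = c.length + 1 := Walk.length_support c
  have h2 : c.support.tail.length = c.support.length - 1 := List.length_tail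
  have hcard := List.Nodup.length_le_card hnd
  simp only [Fintype.card_bool] at hcard
  omega

/-- The hom from `BoolPath` into `Pend G v`: `false ↦ some v`, `true ↦ none`. -/
def pendBHom : BoolPath →g Pend G v where
  toFun := fun b => if b then none else some v
  map_rel' := by
    rintro (_|_) (_|_) h
    · exact absurd rfl h
    · show (Pend G v).Adj (some v) none
      exact rfl
    · show (Pend G v).Adj none (some v)
      exact rfl
    · exact absurd rfl h

/-- `some` as a graph hom. -/
def pendSomeHom : G →g Pend G v where
  toFun := some
  map_rel' := fun h => h

lemma pend_isTree [DecidableEq V] (h : G.IsTree) : (Pend G v).IsTree := by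
  constructor
  · have hreach : ∀ z : Option V, (Pend G v).Reachable z (some v) := by
      rintro (_ | x)
      · exact (SimpleGraph.Adj.reachable (by simp : (Pend G v).Adj none (some v)))
      · exact ((h.isConnected).preconnected x v).map (pendSomeHom G v)
    exact (connected_iff_exists_forall_reachable _).mpr ⟨some v, fun w => (hreach w).symm⟩
  · intro u c hc
    have hside := cycle_side (some v)
      (Set.range (fun b : Bool => if b then (none : Option V) else some v))
      (Set.range some)
      (by rintro (_ | x)
          · exact Or.inl ⟨true, rfl⟩
          · exact Or.inr ⟨x, rfl⟩)
      ⟨false, rfl⟩ ⟨v, rfl⟩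
      (by rintro (_ | x) (_ | y) hadj hxm hym
          · exact absurd hadj (by simp)
          · exact absurd (congrArg some (by simpa using hadj)) hym
          · exact absurd (congrArg some (by simpa using hadj)) hxm
          · constructor
            · rintro ⟨(_|_), ht⟩
              · exact absurd ht.symm (by simpa using hxm)
              · simp at ht
            · rintro ⟨(_|_), ht⟩
              · exact absurd ht.symm (by simpa using hym)
              · simp at ht)
      (by rintro (_ | x) (_ | y) hadj hxm hym
          · exact absurd hadj (by simp)
          · exact absurd (congrArg some (by simpa using hadj)) hym
          · exact absurd (congrArg some (by simpa using hadj)) hxm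
          · exact iff_of_true ⟨x, rfl⟩ ⟨y, rfl⟩)
      c hc
    rcases hside with hA | hB
    · refine no_cycle_of_lift (pendBHom G v) ?_ ?_ (boolPath_isAcyclic) c hc ?_
      · rintro (_|_) (_|_) hxy
        · rfl
        · exact (Option.some_ne_none v (hxy : some v = none)).elim
        · exact (Option.some_ne_none v (hxy.symm : some v = none)).elim
        · rfl
      · rintro (_|_) (_|_) hadj
        · exact absurd (hadj : G.Adj v v) (G.irrefl)
        · exact (Bool.false_ne_true : (false : Bool) ≠ true)
        · exact (fun hq => Bool.noConfusion hq : (true : Bool) ≠ false)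
        · exact absurd hadj (fun hq => hq)
      · intro z hz
        obtain ⟨t, ht⟩ := hA z hz
        exact ⟨t, ht.symm⟩
    · refine no_cycle_of_lift (pendSomeHom G v) (Option.some_injective V)
        (fun a b h => h) h.IsAcyclic c hc ?_
      intro z hz
      obtain ⟨t, ht⟩ := hB z hz
      exact ⟨t, ht.symm⟩
end PendDef


section MergeCount
variable {V₁ V₂ : Type*} (G₁ : SimpleGraph V₁) (G₂ : SimpleGraph V₂) (v₁ : V₁) (v₂ : V₂)

/-- Decomposition of independent sets of the merge containing the glued vertex. -/
noncomputable def mergeEquivA :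
    {S : Set (V₁ ⊕ {x : V₂ // x ≠ v₂}) //
        Sum.inl v₁ ∈ S ∧ ∀ x ∈ S, ∀ y ∈ S, ¬ (Merge G₁ G₂ v₁ v₂).Adj x y} ≃
      {S : Set V₁ // v₁ ∈ S ∧ ∀ x ∈ S, ∀ y ∈ S, ¬ G₁.Adj x y} ×
      {S : Set V₂ // v₂ ∈ S ∧ ∀ x ∈ S, ∀ y ∈ S, ¬ G₂.Adj x y} where
  toFun S :=
    (⟨{x | Sum.inl x ∈ S.1}, S.2.1, fun x hx y hy hadj => S.2.2 _ hx _ hy hadj⟩,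
     ⟨{x | x = v₂ ∨ ∃ h : x ≠ v₂, Sum.inr ⟨x, h⟩ ∈ S.1}, Or.inl rfl, by
        rintro x (rfl | ⟨hx, hxm⟩) y (rfl | ⟨hy, hym⟩) hadj
        · exact G₂.irrefl hadj
        · exact S.2.2 _ S.2.1 _ hym ⟨rfl, hadj⟩
        · exact S.2.2 _ S.2.1 _ hxm ⟨rfl, G₂.adj_symm hadj⟩
        · exact S.2.2 _ hxm _ hym hadj⟩)
  invFun P :=
    ⟨{z | Sum.elim (· ∈ P.1.1) (fun x => x.1 ∈ P.2.1) z}, P.1.2.1, by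
      rintro (x | x) hx (y | y) hy hadj
      · exact P.1.2.2 x hx y hy hadj
      · exact P.2.2.2 v₂ P.2.2.1 y.1 hy hadj.2
      · exact P.2.2.2 v₂ P.2.2.1 x.1 hx hadj.2
      · exact P.2.2.2 x.1 hx y.1 hy hadj⟩
  left_inv S := by
    apply Subtype.ext
    ext z
    rcases z with x | ⟨xv, hxp⟩
    · simp
    · simp only [Set.mem_setOf_eq, Sum.elim_inr]
      constructor
      · rintro (rfl | ⟨h, hm⟩)
        · exact absurd rfl hxp
        · exact hm
      · intro hm
        exact Or.inr ⟨hxp, hm⟩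
  right_inv P := by
    apply Prod.ext
    · apply Subtype.ext
      ext x
      simp
    · apply Subtype.ext
      ext x
      simp only [Set.mem_setOf_eq, Sum.elim_inr]
      constructor
      · rintro (rfl | ⟨h, hm⟩)
        · exact P.2.2.1
        · exact hm
      · intro hm
        by_cases hx : x = v₂
        · exact Or.inl hx
        · exact Or.inr ⟨hx, hm⟩

/-- Decomposition of independent sets of the merge avoiding the glued vertex. -/
noncomputable def mergeEquivB :
    {S : Set (V₁ ⊕ {x : V₂ // x ≠ v₂}) //
        Sum.inl v₁ ∉ S ∧ ∀ x ∈ S, ∀ y ∈ S, ¬ (Merge G₁ G₂ v₁ v₂).Adj x y} ≃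
      {S : Set V₁ // v₁ ∉ S ∧ ∀ x ∈ S, ∀ y ∈ S, ¬ G₁.Adj x y} ×
      {S : Set V₂ // v₂ ∉ S ∧ ∀ x ∈ S, ∀ y ∈ S, ¬ G₂.Adj x y} where
  toFun S :=
    (⟨{x | Sum.inl x ∈ S.1}, S.2.1, fun x hx y hy hadj => S.2.2 _ hx _ hy hadj⟩,
     ⟨{x | ∃ h : x ≠ v₂, Sum.inr ⟨x, h⟩ ∈ S.1}, fun h => h.1 rfl, by
        rintro x ⟨hx, hxm⟩ y ⟨hy, hym⟩ hadj
        exact S.2.2 _ hxm _ hym hadj⟩)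
  invFun P :=
    ⟨{z | Sum.elim (· ∈ P.1.1) (fun x => x.1 ∈ P.2.1) z}, P.1.2.1, by
      rintro (x | x) hx (y | y) hy hadj
      · exact P.1.2.2 x hx y hy hadj
      · exact P.1.2.1 (hadj.1 ▸ hx)
      · exact P.1.2.1 (hadj.1 ▸ hy)
      · exact P.2.2.2 x.1 hx y.1 hy hadj⟩
  left_inv S := by
    apply Subtype.ext
    ext z
    rcases z with x | ⟨xv, hxp⟩
    · simp
    · simp only [Set.mem_setOf_eq, Sum.elim_inr]
      exact ⟨fun ⟨h, hm⟩ => hm, fun hm => ⟨hxp, hm⟩⟩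
  right_inv P := by
    apply Prod.ext
    · apply Subtype.ext
      ext x
      simp
    · apply Subtype.ext
      ext x
      simp only [Set.mem_setOf_eq, Sum.elim_inr]
      constructor
      · rintro ⟨h, hm⟩
        exact hm
      · intro hm
        have hx : x ≠ v₂ := fun hh => P.2.2.1 (hh ▸ hm)
        exact ⟨hx, hm⟩

lemma aCount_merge :
    aCount (Merge G₁ G₂ v₁ v₂) (Sum.inl v₁) = aCount G₁ v₁ * aCount G₂ v₂ := by
  rw [aCount, Nat.card_congr (mergeEquivA G₁ G₂ v₁ v₂), Nat.card_prod]
  rfl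

lemma bCount_merge :
    bCount (Merge G₁ G₂ v₁ v₂) (Sum.inl v₁) = bCount G₁ v₁ * bCount G₂ v₂ := by
  rw [bCount, Nat.card_congr (mergeEquivB G₁ G₂ v₁ v₂), Nat.card_prod]
  rfl
end MergeCount
section PendCount
variable {V : Type*} (G : SimpleGraph V) (v : V)

noncomputable def pendEquivA :
    {S : Set (Option V) // none ∈ S ∧ ∀ x ∈ S, ∀ y ∈ S, ¬ (Pend G v).Adj x y} ≃
      {S : Set V // v ∉ S ∧ ∀ x ∈ S, ∀ y ∈ S, ¬ G.Adj x y} where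
  toFun S :=
    ⟨{x | some x ∈ S.1},
      fun hv => S.2.2 none S.2.1 (some v) hv rfl,
      fun x hx y hy hadj => S.2.2 _ hx _ hy hadj⟩
  invFun S' :=
    ⟨{z | z = none ∨ ∃ x ∈ S'.1, z = some x}, Or.inl rfl, by
      rintro z (rfl | ⟨x, hx, rfl⟩) w (rfl | ⟨y, hy, rfl⟩) hadj
      · exact hadj
      · exact S'.2.1 ((hadj : y = v) ▸ hy)
      · exact S'.2.1 ((hadj : x = v) ▸ hx)
      · exact S'.2.2 x hx y hy hadj⟩
  left_inv S := by
    apply Subtype.ext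
    ext z
    rcases z with _ | x
    · simp only [Set.mem_setOf_eq]
      exact iff_of_true (Or.inl trivial) S.2.1
    · simp only [Set.mem_setOf_eq]
      constructor
      · rintro (h | ⟨y, hy, h⟩)
        · exact absurd h (by simp)
        · exact (Option.some.inj h) ▸ hy
      · intro hm
        exact Or.inr ⟨x, hm, rfl⟩
  right_inv S' := by
    apply Subtype.ext
    ext x
    simp only [Set.mem_setOf_eq]
    constructor
    · rintro (h | ⟨y, hy, h⟩)
      · exact absurd h (by simp)
      · exact (Option.some.inj h) ▸ hy
    · intro hm
      exact Or.inr ⟨x, hm, rfl⟩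

noncomputable def pendEquivB :
    {S : Set (Option V) // none ∉ S ∧ ∀ x ∈ S, ∀ y ∈ S, ¬ (Pend G v).Adj x y} ≃
      {S : Set V // ∀ x ∈ S, ∀ y ∈ S, ¬ G.Adj x y} where
  toFun S := ⟨{x | some x ∈ S.1}, fun x hx y hy hadj => S.2.2 _ hx _ hy hadj⟩
  invFun S' :=
    ⟨{z | ∃ x ∈ S'.1, z = some x}, by rintro ⟨x, hx, h⟩; exact Option.some_ne_none x h.symm, by
      rintro z ⟨x, hx, rfl⟩ w ⟨y, hy, rfl⟩ hadj
      exact S'.2 x hx y hy hadj⟩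
  left_inv S := by
    apply Subtype.ext
    ext z
    rcases z with _ | x
    · simp only [Set.mem_setOf_eq]
      constructor
      · rintro ⟨y, hy, h⟩
        exact absurd h (by simp)
      · intro hm
        exact absurd hm S.2.1
    · simp only [Set.mem_setOf_eq]
      constructor
      · rintro ⟨y, hy, h⟩
        exact (Option.some.inj h) ▸ hy
      · intro hm
        exact ⟨x, hm, rfl⟩
  right_inv S' := by
    apply Subtype.ext
    ext x
    simp only [Set.mem_setOf_eq]
    constructor
    · rintro ⟨y, hy, h⟩
      exact (Option.some.inj h) ▸ hy
    · intro hm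
      exact ⟨x, hm, rfl⟩

open Classical in
noncomputable def indepSplitEquiv :
    {S : Set V // ∀ x ∈ S, ∀ y ∈ S, ¬ G.Adj x y} ≃
      {S : Set V // v ∈ S ∧ ∀ x ∈ S, ∀ y ∈ S, ¬ G.Adj x y} ⊕
      {S : Set V // v ∉ S ∧ ∀ x ∈ S, ∀ y ∈ S, ¬ G.Adj x y} where
  toFun S := if h : v ∈ S.1 then Sum.inl ⟨S.1, h, S.2⟩ else Sum.inr ⟨S.1, h, S.2⟩
  invFun := Sum.elim (fun S => ⟨S.1, S.2.2⟩) (fun S => ⟨S.1, S.2.2⟩)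
  left_inv S := by
    by_cases h : v ∈ S.1 <;> simp [h]
  right_inv P := by
    rcases P with S | S
    · simp [S.2.1]
    · simp [S.2.1]

lemma aCount_pend : aCount (Pend G v) none = bCount G v := by
  rw [aCount, Nat.card_congr (pendEquivA G v)]
  rfl

lemma bCount_pend [Finite V] : bCount (Pend G v) none = aCount G v + bCount G v := by
  rw [bCount, Nat.card_congr ((pendEquivB G v).trans (indepSplitEquiv G v)), Nat.card_sum]
  rfl
end PendCount
section Transfer
variable {U W : Type*}

noncomputable def comapEquivA (e : U ≃ W) (G : SimpleGraph W) (v : W) :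
    {s : Set U // e.symm v ∈ s ∧ ∀ x ∈ s, ∀ y ∈ s, ¬ (G.comap e).Adj x y} ≃
      {s : Set W // v ∈ s ∧ ∀ x ∈ s, ∀ y ∈ s, ¬ G.Adj x y} where
  toFun s :=
    ⟨{w | e.symm w ∈ s.1}, by simpa using s.2.1,
      fun x hx y hy hadj => s.2.2 _ hx _ hy (by simpa using hadj)⟩
  invFun S :=
    ⟨{u | e u ∈ S.1}, by simpa using S.2.1,
      fun x hx y hy hadj => S.2.2 _ hx _ hy hadj⟩
  left_inv s := by
    apply Subtype.ext
    ext z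
    simp
  right_inv S := by
    apply Subtype.ext
    ext z
    simp

noncomputable def comapEquivB (e : U ≃ W) (G : SimpleGraph W) (v : W) :
    {s : Set U // e.symm v ∉ s ∧ ∀ x ∈ s, ∀ y ∈ s, ¬ (G.comap e).Adj x y} ≃
      {s : Set W // v ∉ s ∧ ∀ x ∈ s, ∀ y ∈ s, ¬ G.Adj x y} where
  toFun s :=
    ⟨{w | e.symm w ∈ s.1}, by simpa using s.2.1,
      fun x hx y hy hadj => s.2.2 _ hx _ hy (by simpa using hadj)⟩
  invFun S :=
    ⟨{u | e u ∈ S.1}, by simpa using S.2.1,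
      fun x hx y hy hadj => S.2.2 _ hx _ hy hadj⟩
  left_inv s := by
    apply Subtype.ext
    ext z
    simp
  right_inv S := by
    apply Subtype.ext
    ext z
    simp

lemma aCount_comap (e : U ≃ W) (G : SimpleGraph W) (v : W) :
    aCount (G.comap e) (e.symm v) = aCount G v :=
  Nat.card_congr (comapEquivA e G v)

lemma bCount_comap (e : U ≃ W) (G : SimpleGraph W) (v : W) :
    bCount (G.comap e) (e.symm v) = bCount G v :=
  Nat.card_congr (comapEquivB e G v)

lemma isTree_comap (e : U ≃ W) (G : SimpleGraph W) (h : G.IsTree) :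
    (G.comap e).IsTree := by
  constructor
  · refine (connected_iff_exists_forall_reachable _).mpr ?_
    have hne : Nonempty W := h.isConnected.nonempty
    obtain ⟨w₀⟩ := hne
    refine ⟨e.symm w₀, fun u => ?_⟩
    have h1 := (h.isConnected.preconnected w₀ (e u)).map
      (⟨fun w => e.symm w, fun {a b} hab => by simpa using hab⟩ : G →g G.comap (e : U → W))
    have h2 : (G.comap (e : U → W)).Reachable (e.symm w₀) (e.symm (e u)) := h1
    exact (e.symm_apply_apply u) ▸ h2
  · intro u c hc
    have hcyc : (c.map (⟨fun u => e u, fun {a b} hab => hab⟩ :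
        G.comap (e : U → W) →g G)).IsCycle :=
      hc.map (fun x y hxy => e.injective hxy)
    exact h.IsAcyclic _ hcyc
end Transfer
/-- If some marked tree realizes the pair `(a, b)` and some marked tree
realizes `(g', k·g')`, then some marked tree realizes
`(k·g'²·b, k·g'²·(a + k·b))`. -/
theorem marked_tree_combination (a b g' k : ℕ)
    (ha : 0 < a) (hb : 0 < b) (hg' : 0 < g') (hk : 0 < k)
    (h₁ : ∃ (n : ℕ) (T : SimpleGraph (Fin n)) (v : Fin n),
      T.IsTree ∧ aCount T v = a ∧ bCount T v = b)
    (h₂ : ∃ (n : ℕ) (T' : SimpleGraph (Fin n)) (v' : Fin n),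
      T'.IsTree ∧ aCount T' v' = g' ∧ bCount T' v' = k * g') :
    ∃ (n : ℕ) (T₀ : SimpleGraph (Fin n)) (w : Fin n),
      T₀.IsTree ∧ aCount T₀ w = k * g' ^ 2 * b ∧
        bCount T₀ w = k * g' ^ 2 * (a + k * b) := by
  obtain ⟨n₁, T, v, hT, hTa, hTb⟩ := h₁
  obtain ⟨n₂, T', v', hT', hT'a, hT'b⟩ := h₂
  -- first merge
  have hM1 : (Merge T T' v v').IsTree := merge_isTree T T' v v' hT hT'
  have hM1a : aCount (Merge T T' v v') (Sum.inl v) = a * g' := by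
    rw [aCount_merge, hTa, hT'a]
  have hM1b : bCount (Merge T T' v v') (Sum.inl v) = b * (k * g') := by
    rw [bCount_merge, hTb, hT'b]
  -- pendant
  have hP1 : (Pend (Merge T T' v v') (Sum.inl v)).IsTree := pend_isTree _ _ hM1
  have hP1a : aCount (Pend (Merge T T' v v') (Sum.inl v)) none = b * (k * g') := by
    rw [aCount_pend, hM1b]
  have hP1b : bCount (Pend (Merge T T' v v') (Sum.inl v)) none
      = a * g' + b * (k * g') := by
    rw [bCount_pend, hM1a, hM1b]
  -- second merge
  have hM2 : (Merge (Pend (Merge T T' v v') (Sum.inl v)) T' none v').IsTree :=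
    merge_isTree _ T' none v' hP1 hT'
  have hM2a : aCount (Merge (Pend (Merge T T' v v') (Sum.inl v)) T' none v')
      (Sum.inl none) = b * (k * g') * g' := by
    rw [aCount_merge, hP1a, hT'a]
  have hM2b : bCount (Merge (Pend (Merge T T' v v') (Sum.inl v)) T' none v')
      (Sum.inl none) = (a * g' + b * (k * g')) * (k * g') := by
    rw [bCount_merge, hP1b, hT'b]
  -- transfer to Fin
  set X := (Option ((Fin n₁) ⊕ {x : Fin n₂ // x ≠ v'}) ⊕ {x : Fin n₂ // x ≠ v'}) with hX
  let e : Fin (Fintype.card X) ≃ X := (Fintype.equivFin X).symm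
  refine ⟨Fintype.card X,
    SimpleGraph.comap e (Merge (Pend (Merge T T' v v') (Sum.inl v)) T' none v'),
    e.symm (Sum.inl none), isTree_comap e _ hM2, ?_, ?_⟩
  · rw [aCount_comap, hM2a]
    ring
  · rw [bCount_comap, hM2b]
    ring
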